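/- There are universal constants C₁, C₂ ≥ 1 such that for every n ≥ 2 and every Orlicz function G, there exists a monotone norm M on ℝⁿ that is (C₁·log₂ n)-supermodular and satisfies ‖x‖_G ≤ M(x) ≤ C₂·‖x‖_G for all x ∈ ℝⁿ with nonnegative coordinates. -/

import Mathlib

set_option linter.unusedSectionVars false

noncomputable section

/-- A monotone norm on ℝⁿ: subadditive, absolutely homogeneous, point-separating, and
monotone on the nonnegative orthant. -/
def IsMonotoneNorm {n : ℕ} (N : (Fin n → ℝ) → ℝ) : Prop :=
  (∀ x y, N (x + y) ≤ N x + N y) ∧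
  (∀ (c : ℝ) (x), N (c • x) = |c| * N x) ∧
  (∀ x, N x = 0 → x = 0) ∧
  (∀ x y : Fin n → ℝ, 0 ≤ x → x ≤ y → N x ≤ N y)

/-- `N` is `p`-supermodular: `N(u+v+w)^p − N(u+v)^p ≥ N(u+w)^p − N(u)^p` for all
nonnegative `u, v, w`. -/
def IsPSupermodular {n : ℕ} (N : (Fin n → ℝ) → ℝ) (p : ℝ) : Prop :=
  ∀ u v w : Fin n → ℝ, 0 ≤ u → 0 ≤ v → 0 ≤ w →
    N (u + w) ^ p - N u ^ p ≤ N (u + v + w) ^ p - N (u + v) ^ p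

/-- An Orlicz function: continuous, convex and nondecreasing on `[0,∞)`, with `G 0 = 0` and
`G(t) → ∞` as `t → ∞`. -/
def IsOrliczFunction (G : ℝ → ℝ) : Prop :=
  ContinuousOn G (Set.Ici 0) ∧ ConvexOn ℝ (Set.Ici 0) G ∧
  MonotoneOn G (Set.Ici 0) ∧ G 0 = 0 ∧
  Filter.Tendsto G Filter.atTop Filter.atTop

/-- The Orlicz norm generated by `G`: `inf {α > 0 : ∑ᵢ G (xᵢ/α) ≤ 1}`. -/
def orliczNorm {n : ℕ} (G : ℝ → ℝ) (x : Fin n → ℝ) : ℝ :=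
  sInf {α : ℝ | 0 < α ∧ ∑ i, G (x i / α) ≤ 1}

namespace SupApprox

open Real Set Filter Pointwise

/-! ### One-dimensional lemmas -/

/-- Slopes of a convex function over "shifted to the right" intervals increase. -/
lemma slope4 {f : ℝ → ℝ} {s : Set ℝ} (hf : ConvexOn ℝ s f) {a₁ b₁ a₂ b₂ : ℝ}
    (ha₁ : a₁ ∈ s) (hb₁ : b₁ ∈ s) (ha₂ : a₂ ∈ s) (hb₂ : b₂ ∈ s)
    (h₁ : a₁ < b₁) (h₂ : a₂ < b₂) (ha : a₁ ≤ a₂) (hb : b₁ ≤ b₂) :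
    (f b₁ - f a₁) / (b₁ - a₁) ≤ (f b₂ - f a₂) / (b₂ - a₂) := by
  have step1 : (f b₁ - f a₁) / (b₁ - a₁) ≤ (f b₂ - f a₁) / (b₂ - a₁) :=
    hf.secant_mono ha₁ hb₁ hb₂ h₁.ne' (lt_of_lt_of_le h₁ hb).ne' hb
  have step2 : (f a₁ - f b₂) / (a₁ - b₂) ≤ (f a₂ - f b₂) / (a₂ - b₂) :=
    hf.secant_mono hb₂ ha₁ ha₂ (lt_of_lt_of_le h₁ hb).ne h₂.ne ha
  have e1 : (f a₁ - f b₂) / (a₁ - b₂) = (f b₂ - f a₁) / (b₂ - a₁) := by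
    rw [← neg_div_neg_eq]; ring_nf
  have e2 : (f a₂ - f b₂) / (a₂ - b₂) = (f b₂ - f a₂) / (b₂ - a₂) := by
    rw [← neg_div_neg_eq]; ring_nf
  calc (f b₁ - f a₁) / (b₁ - a₁) ≤ (f b₂ - f a₁) / (b₂ - a₁) := step1
    _ = (f a₁ - f b₂) / (a₁ - b₂) := e1.symm
    _ ≤ (f a₂ - f b₂) / (a₂ - b₂) := step2
    _ = (f b₂ - f a₂) / (b₂ - a₂) := e2

/-- Monotonicity of increments of `x ↦ x^q`. -/
lemma rpow_sub_le_rpow_sub {q b₁ b₂ d₁ d₂ : ℝ} (hq : 1 ≤ q) (hb₁ : 0 ≤ b₁) (hb : b₁ ≤ b₂)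
    (hd₁ : 0 ≤ d₁) (hd : d₁ ≤ d₂) :
    (b₁ + d₁) ^ q - b₁ ^ q ≤ (b₂ + d₂) ^ q - b₂ ^ q := by
  have hb₂ : 0 ≤ b₂ := le_trans hb₁ hb
  have key : (b₁ + d₁) ^ q - b₁ ^ q ≤ (b₂ + d₁) ^ q - b₂ ^ q := by
    rcases eq_or_lt_of_le hd₁ with h0 | h0
    · simp [← h0]
    rcases eq_or_lt_of_le hb with h1 | h1
    · simp [h1]
    have hs := slope4 (convexOn_rpow hq) (a₁ := b₁) (b₁ := b₁ + d₁) (a₂ := b₂) (b₂ := b₂ + d₁)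
      hb₁ (by positivity : (0:ℝ) ≤ b₁ + d₁) hb₂ (by positivity : (0:ℝ) ≤ b₂ + d₁)
      (by linarith) (by linarith) hb (by linarith)
    have e : b₁ + d₁ - b₁ = d₁ := by ring
    have e' : b₂ + d₁ - b₂ = d₁ := by ring
    rw [e, e'] at hs
    have := mul_le_mul_of_nonneg_left hs (le_of_lt h0)
    rw [mul_div_cancel₀ _ h0.ne', mul_div_cancel₀ _ h0.ne'] at this
    linarith
  have mono : (b₂ + d₁) ^ q ≤ (b₂ + d₂) ^ q :=
    Real.rpow_le_rpow (by positivity) (by linarith) (by linarith)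
  linarith

/-- superadditivity of `x^q` on nonnegatives, two terms. -/
lemma rpow_superadd {q a b : ℝ} (hq : 1 ≤ q) (ha : 0 ≤ a) (hb : 0 ≤ b) :
    a ^ q + b ^ q ≤ (a + b) ^ q := by
  have h2 : (0 + b) ^ q - (0:ℝ) ^ q ≤ (a + b) ^ q - a ^ q :=
    rpow_sub_le_rpow_sub hq le_rfl ha (by exact hb) le_rfl
  have hz : (0:ℝ) ^ q = 0 := Real.zero_rpow (by linarith)
  rw [zero_add, hz, sub_zero] at h2
  linarith

lemma sum_rpow_le {ι : Type*} (s : Finset ι) (f : ι → ℝ) (hf : ∀ i ∈ s, 0 ≤ f i) {q : ℝ}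
    (hq : 1 ≤ q) : ∑ i ∈ s, f i ^ q ≤ (∑ i ∈ s, f i) ^ q := by
  induction s using Finset.cons_induction with
  | empty => simp [Real.zero_rpow (by linarith : q ≠ 0)]
  | cons a s ha ih =>
      rw [Finset.sum_cons, Finset.sum_cons]
      have hfa := hf a (Finset.mem_cons_self a s)
      have hfs : ∀ i ∈ s, 0 ≤ f i := fun i hi => hf i (Finset.mem_cons_of_mem hi)
      calc f a ^ q + ∑ i ∈ s, f i ^ q ≤ f a ^ q + (∑ i ∈ s, f i) ^ q := by
            linarith [ih hfs]
        _ ≤ (f a + ∑ i ∈ s, f i) ^ q :=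
            rpow_superadd hq hfa (Finset.sum_nonneg hfs)

/-- Power-mean inequality. -/
lemma pm {m : ℕ} (f : Fin m → ℝ) (hf : ∀ i, 0 ≤ f i) {q : ℝ} (hq : 1 ≤ q) :
    (∑ i, f i) ^ q ≤ (m : ℝ) ^ (q - 1) * ∑ i, f i ^ q := by
  rcases Nat.eq_zero_or_pos m with hm | hm
  · subst hm
    simp [Real.zero_rpow (by linarith : q ≠ 0)]
  have hm' : (0:ℝ) < m := by exact_mod_cast hm
  have jensen := (convexOn_rpow hq).map_sum_le (t := Finset.univ)
    (w := fun _ : Fin m => (m : ℝ)⁻¹) (p := fun i => (m : ℝ) * f i)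
    (fun i _ => by positivity)
    (by simp [Finset.card_univ]; field_simp)
    (fun i _ => by simp only [Set.mem_Ici]; have := hf i; positivity)
  have e1 : (∑ i, (m:ℝ)⁻¹ • ((m:ℝ) * f i)) = ∑ i, f i := by
    apply Finset.sum_congr rfl
    intro i _
    rw [smul_eq_mul, ← mul_assoc, inv_mul_cancel₀ hm'.ne', one_mul]
  rw [e1] at jensen
  calc (∑ i, f i) ^ q ≤ ∑ i, (m:ℝ)⁻¹ • ((m:ℝ) * f i) ^ q := jensen
    _ = ∑ i, (m:ℝ)⁻¹ * ((m:ℝ) ^ q * f i ^ q) :=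
        Finset.sum_congr rfl fun i _ => by
          rw [smul_eq_mul, Real.mul_rpow (le_of_lt hm') (hf i)]
    _ = (m:ℝ)⁻¹ * ((m:ℝ) ^ q * ∑ i, f i ^ q) := by
        rw [← Finset.mul_sum, ← Finset.mul_sum]
    _ = (m:ℝ) ^ (q - 1) * ∑ i, f i ^ q := by
        rw [Real.rpow_sub hm', Real.rpow_one]
        ring


/-! ### The truncated conjugate `gfun` -/

/-- Bundle of hypotheses about the Orlicz function `G` and threshold `T₁`. -/
structure Good (G : ℝ → ℝ) (T₁ : ℝ) : Prop where
  cont : ContinuousOn G (Set.Ici 0)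
  conv : ConvexOn ℝ (Set.Ici 0) G
  mono : MonotoneOn G (Set.Ici 0)
  zero : G 0 = 0
  T1nn : 0 ≤ T₁
  T1big : 2 ≤ G T₁

/-- Truncated convex conjugate of `G`. -/
def gfun (G : ℝ → ℝ) (T₁ : ℝ) (s : ℝ) : ℝ :=
  sSup ((fun t => s * t - G t) '' Set.Icc 0 (2 * T₁))

namespace Good

variable {G : ℝ → ℝ} {T₁ : ℝ} (H : Good G T₁)
include H

lemma Gnn {t : ℝ} (ht : 0 ≤ t) : 0 ≤ G t := by
  have h := H.mono (Set.mem_Ici.mpr (le_refl (0:ℝ))) (Set.mem_Ici.mpr ht) ht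
  rw [H.zero] at h; exact h

lemma T1pos : 0 < T₁ := by
  rcases eq_or_lt_of_le H.T1nn with h | h
  · exfalso; have := H.T1big; rw [← h, H.zero] at this; linarith
  · exact h

lemma g_bdd (s : ℝ) : BddAbove ((fun t => s * t - G t) '' Set.Icc 0 (2 * T₁)) := by
  refine ⟨max s 0 * (2 * T₁), ?_⟩
  rintro _ ⟨t, ht, rfl⟩
  have h1 : 0 ≤ G t := H.Gnn ht.1
  have h2 : s * t ≤ max s 0 * t := mul_le_mul_of_nonneg_right (le_max_left s 0) ht.1
  have h3 : max s 0 * t ≤ max s 0 * (2 * T₁) :=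
    mul_le_mul_of_nonneg_left ht.2 (le_max_right s 0)
  simp only
  linarith

lemma le_g {s t : ℝ} (ht : t ∈ Set.Icc 0 (2 * T₁)) : s * t - G t ≤ gfun G T₁ s :=
  le_csSup (H.g_bdd s) (Set.mem_image_of_mem _ ht)

lemma g_le {s a : ℝ} (ha : 0 ≤ a) (h : ∀ t ∈ Set.Icc 0 (2 * T₁), s * t - G t ≤ a) :
    gfun G T₁ s ≤ a := by
  clear H
  exact Real.sSup_le (by rintro _ ⟨t, ht, rfl⟩; exact h t ht) ha

lemma g_nonneg (s : ℝ) : 0 ≤ gfun G T₁ s := by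
  have h := H.le_g (s := s) (t := 0) ⟨le_rfl, by linarith [H.T1pos]⟩
  rw [mul_zero, H.zero, sub_zero] at h
  exact h

lemma g_zero : gfun G T₁ 0 = 0 := by
  refine le_antisymm (H.g_le le_rfl fun t ht => ?_) (H.g_nonneg 0)
  have := H.Gnn ht.1
  simp only [zero_mul, zero_sub]
  linarith

lemma g_mono : Monotone (gfun G T₁) := by
  intro s₁ s₂ h
  refine Real.sSup_le ?_ (H.g_nonneg s₂)
  rintro _ ⟨t, ht, rfl⟩
  have h1 : s₁ * t ≤ s₂ * t := mul_le_mul_of_nonneg_right h ht.1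
  have h2 := H.le_g (s := s₂) ht
  simp only
  linarith

lemma g_convex : ConvexOn ℝ Set.univ (gfun G T₁) := by
  refine ⟨convex_univ, ?_⟩
  intro x _ y _ a b ha hb hab
  simp only [smul_eq_mul]
  refine Real.sSup_le ?_ ?_
  · rintro _ ⟨t, ht, rfl⟩
    have h1 := H.le_g (s := x) ht
    have h2 := H.le_g (s := y) ht
    have key : (a * x + b * y) * t - G t = a * (x * t - G t) + b * (y * t - G t) := by
      linear_combination (G t) * hab
    simp only
    rw [key]
    exact add_le_add (mul_le_mul_of_nonneg_left h1 ha) (mul_le_mul_of_nonneg_left h2 hb)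
  · exact add_nonneg (mul_nonneg ha (H.g_nonneg x)) (mul_nonneg hb (H.g_nonneg y))

lemma g_scale {c s : ℝ} (hc0 : 0 ≤ c) (hc1 : c ≤ 1) : gfun G T₁ (c * s) ≤ c * gfun G T₁ s := by
  have h := H.g_convex.2 (Set.mem_univ s) (Set.mem_univ (0:ℝ)) hc0
    (by linarith : (0:ℝ) ≤ 1 - c) (by ring)
  simp only [smul_eq_mul, mul_zero, add_zero] at h
  rw [H.g_zero, mul_zero, add_zero] at h
  exact h

lemma g_slope {k₁ k₂ t₁ t₂ : ℝ} (hk₁ : 0 < k₁) (hk : k₁ ≤ k₂) (ht₁ : 0 ≤ t₁) (ht : t₁ < t₂) :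
    (gfun G T₁ (k₁ * t₂) - gfun G T₁ (k₁ * t₁)) / k₁ ≤
      (gfun G T₁ (k₂ * t₂) - gfun G T₁ (k₂ * t₁)) / k₂ := by
  have hk₂ : 0 < k₂ := lt_of_lt_of_le hk₁ hk
  have hd : 0 < t₂ - t₁ := by linarith
  have hs := slope4 H.g_convex (a₁ := k₁ * t₁) (b₁ := k₁ * t₂) (a₂ := k₂ * t₁) (b₂ := k₂ * t₂)
    (Set.mem_univ _) (Set.mem_univ _) (Set.mem_univ _) (Set.mem_univ _)
    (by nlinarith) (by nlinarith)
    (mul_le_mul_of_nonneg_right hk ht₁) (mul_le_mul_of_nonneg_right hk (by linarith))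
  have e1 : k₁ * t₂ - k₁ * t₁ = k₁ * (t₂ - t₁) := by ring
  have e2 : k₂ * t₂ - k₂ * t₁ = k₂ * (t₂ - t₁) := by ring
  rw [e1, e2, ← div_div, ← div_div] at hs
  exact (div_le_div_iff_of_pos_right hd).mp hs

lemma young {s t : ℝ} (ht : t ∈ Set.Icc 0 (2 * T₁)) : s * t ≤ gfun G T₁ s + G t := by
  linarith [H.le_g (s := s) ht]

lemma G_double {z : ℝ} (hz : 0 ≤ z) : 2 * G z ≤ G (2 * z) := by
  have h := H.conv.2 (Set.mem_Ici.mpr (le_refl (0:ℝ))) (Set.mem_Ici.mpr (by linarith : (0:ℝ) ≤ 2 * z))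
    (by norm_num : (0:ℝ) ≤ 1/2) (by norm_num : (0:ℝ) ≤ 1/2) (by norm_num)
  simp only [smul_eq_mul, mul_zero, zero_add] at h
  rw [H.zero] at h
  have e : (1:ℝ)/2 * (2 * z) = z := by ring
  rw [e] at h
  linarith

lemma g_chord {z : ℝ} (hz : 0 < z) (hzT : 2 * z ≤ 2 * T₁) :
    gfun G T₁ ((G (2 * z) - G z) / z) ≤ 2 * (G (2 * z) - G z) := by
  have hG2z : G z ≤ G (2 * z) :=
    H.mono (Set.mem_Ici.mpr hz.le) (Set.mem_Ici.mpr (by linarith)) (by linarith)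
  set y := (G (2 * z) - G z) / z with hy_def
  have hy : 0 ≤ y := div_nonneg (by linarith) hz.le
  have hy2z : y * (2 * z) = 2 * (G (2 * z) - G z) := by
    rw [hy_def]; field_simp
  refine H.g_le (by linarith) ?_
  intro t ht
  rcases le_or_gt t (2 * z) with h | h
  · have h1 : y * t ≤ y * (2 * z) := mul_le_mul_of_nonneg_left h hy
    have h2 : 0 ≤ G t := H.Gnn ht.1
    linarith
  · have hslope := H.conv.slope_mono_adjacent (Set.mem_Ici.mpr hz.le)
      (Set.mem_Ici.mpr ht.1) (by linarith : z < 2 * z) h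
    have e : 2 * z - z = z := by ring
    rw [e] at hslope
    have hyt : y * (t - 2 * z) ≤ G t - G (2 * z) := by
      have h3 := mul_le_mul_of_nonneg_right hslope (by linarith : (0:ℝ) ≤ t - 2 * z)
      rw [div_mul_cancel₀ _ (by linarith : t - 2 * z ≠ 0)] at h3
      rw [hy_def]; exact h3
    have h4 : 0 ≤ G (2 * z) := H.Gnn (by linarith)
    nlinarith

end Good

/-! ### The dual object `B` -/

variable {n : ℕ}

/-- candidate value inside the inf defining `B`. -/
def Bcand (G : ℝ → ℝ) (T₁ q : ℝ) (y : Fin n → ℝ) (k : ℝ) : ℝ :=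
  k ^ (-q) * (1 + ∑ i, gfun G T₁ (k * y i) ^ q)

def Bfun (G : ℝ → ℝ) (T₁ q : ℝ) (y : Fin n → ℝ) : ℝ :=
  sInf (Bcand G T₁ q y '' Set.Ioi 0)

namespace Good

variable {G : ℝ → ℝ} {T₁ : ℝ} (H : Good G T₁)
include H

lemma Bcand_nonneg {q : ℝ} (y : Fin n → ℝ) {k : ℝ} (hk : 0 < k) : 0 ≤ Bcand G T₁ q y k := by
  unfold Bcand
  have h1 : 0 ≤ ∑ i, gfun G T₁ (k * y i) ^ q :=
    Finset.sum_nonneg fun i _ => Real.rpow_nonneg (H.g_nonneg _) q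
  have h2 : (0:ℝ) ≤ k ^ (-q) := Real.rpow_nonneg hk.le _
  positivity

lemma B_nonneg {q : ℝ} (y : Fin n → ℝ) : 0 ≤ Bfun G T₁ q y := by
  apply Real.sInf_nonneg
  rintro _ ⟨k, hk, rfl⟩
  exact H.Bcand_nonneg y hk

lemma B_bddBelow {q : ℝ} (y : Fin n → ℝ) : BddBelow (Bcand G T₁ q y '' Set.Ioi 0) := by
  refine ⟨0, ?_⟩
  rintro _ ⟨k, hk, rfl⟩
  exact H.Bcand_nonneg y hk

lemma B_ne {q : ℝ} (y : Fin n → ℝ) : (Bcand G T₁ q y '' Set.Ioi 0).Nonempty :=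
  ⟨Bcand G T₁ q y 1, Set.mem_image_of_mem _ (by norm_num)⟩

lemma B_le {q : ℝ} (y : Fin n → ℝ) {k : ℝ} (hk : 0 < k) :
    Bfun G T₁ q y ≤ Bcand G T₁ q y k :=
  csInf_le (H.B_bddBelow y) (Set.mem_image_of_mem _ hk)

lemma B_eps {q : ℝ} (y : Fin n → ℝ) {ε : ℝ} (hε : 0 < ε) :
    ∃ k : ℝ, 0 < k ∧ Bcand G T₁ q y k < Bfun G T₁ q y + ε := by
  obtain ⟨a, ha, halt⟩ := Real.lt_sInf_add_pos (H.B_ne (q := q) y) hε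
  obtain ⟨k, hk, rfl⟩ := ha
  exact ⟨k, hk, halt⟩

lemma B_zero {q : ℝ} (hq : 1 ≤ q) : Bfun G T₁ q (0 : Fin n → ℝ) = 0 := by
  have hq0 : q ≠ 0 := by linarith
  refine le_antisymm ?_ (H.B_nonneg 0)
  refine _root_.le_of_forall_pos_le_add fun ε hε => ?_
  set k : ℝ := ((ε/2) ^ (-(1/q)) : ℝ) with hk_def
  have hε2 : (0:ℝ) < ε/2 := by linarith
  have hk : 0 < k := Real.rpow_pos_of_pos hε2 _
  have hcand : Bcand G T₁ q (0 : Fin n → ℝ) k = ε/2 := by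
    unfold Bcand
    have hzero : ∀ i : Fin n, gfun G T₁ (k * (0:Fin n → ℝ) i) ^ q = 0 := by
      intro i
      simp only [Pi.zero_apply, mul_zero, H.g_zero]
      exact Real.zero_rpow hq0
    rw [Finset.sum_congr rfl fun i _ => hzero i]
    simp only [Finset.sum_const, smul_zero, add_zero, mul_one]
    rw [hk_def, ← Real.rpow_mul hε2.le]
    have : -(1/q) * -q = 1 := by field_simp
    rw [this, Real.rpow_one]
  have := H.B_le (q := q) (0 : Fin n → ℝ) hk
  rw [hcand] at this
  linarith

/-- the key exchange inequality for the submodularity of `B`. -/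
lemma Bcand_exchange {q : ℝ} (hq : 1 ≤ q) {y z : Fin n → ℝ}
    (hy : ∀ i, 0 ≤ y i) {k₁ k₂ : ℝ} (hk₁ : 0 < k₁) (hk : k₁ ≤ k₂) :
    Bcand G T₁ q (fun i => max (y i) (z i)) k₁ + Bcand G T₁ q (fun i => min (y i) (z i)) k₂ ≤
      Bcand G T₁ q y k₁ + Bcand G T₁ q z k₂ := by
  have hk₂ : 0 < k₂ := lt_of_lt_of_le hk₁ hk
  have key : ∀ i : Fin n,
      k₁ ^ (-q) * gfun G T₁ (k₁ * max (y i) (z i)) ^ q +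
        k₂ ^ (-q) * gfun G T₁ (k₂ * min (y i) (z i)) ^ q ≤
      k₁ ^ (-q) * gfun G T₁ (k₁ * y i) ^ q + k₂ ^ (-q) * gfun G T₁ (k₂ * z i) ^ q := by
    intro i
    rcases le_total (z i) (y i) with h | h
    · rw [max_eq_left h, min_eq_right h]
    · rw [max_eq_right h, min_eq_left h]
      rcases eq_or_lt_of_le h with he | hlt
      · rw [he]
      · have conv : ∀ (k : ℝ), 0 < k → ∀ (s : ℝ),
            k ^ (-q) * gfun G T₁ (k * s) ^ q = (gfun G T₁ (k * s) / k) ^ q := by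
          intro k hk0 s
          rw [Real.div_rpow (H.g_nonneg _) hk0.le, Real.rpow_neg hk0.le, div_eq_mul_inv,
            mul_comm]
        rw [conv k₁ hk₁ (z i), conv k₁ hk₁ (y i), conv k₂ hk₂ (z i), conv k₂ hk₂ (y i)]
        set b₁ := gfun G T₁ (k₁ * y i) / k₁ with hb₁def
        set a₁ := gfun G T₁ (k₁ * z i) / k₁ with ha₁def
        set b₂ := gfun G T₁ (k₂ * y i) / k₂ with hb₂def
        set a₂ := gfun G T₁ (k₂ * z i) / k₂ with ha₂def
        have hb₁nn : 0 ≤ b₁ := div_nonneg (H.g_nonneg _) hk₁.le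
        have hbb : b₁ ≤ b₂ := by
          have hgs := H.g_scale (c := k₁/k₂) (s := k₂ * y i) (by positivity)
            (by rw [div_le_one hk₂]; exact hk)
          have e : k₁ / k₂ * (k₂ * y i) = k₁ * y i := by field_simp
          rw [e] at hgs
          have h2 := mul_le_mul_of_nonneg_right hgs hk₂.le
          have e2 : k₁ / k₂ * gfun G T₁ (k₂ * y i) * k₂ = gfun G T₁ (k₂ * y i) * k₁ := by
            field_simp
          rw [e2] at h2
          rw [hb₁def, hb₂def, div_le_div_iff₀ hk₁ hk₂]
          linarith
        have hmono1 : b₁ ≤ a₁ := by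
          rw [hb₁def, ha₁def]
          gcongr
          exact H.g_mono (mul_le_mul_of_nonneg_left h hk₁.le)
        have hd : a₁ - b₁ ≤ a₂ - b₂ := by
          have hs := H.g_slope hk₁ hk (hy i) hlt
          rw [ha₁def, hb₁def, ha₂def, hb₂def, ← sub_div, ← sub_div]
          exact hs
        have hfin := rpow_sub_le_rpow_sub hq hb₁nn hbb (by linarith) hd
        have e₁ : b₁ + (a₁ - b₁) = a₁ := by ring
        have e₂ : b₂ + (a₂ - b₂) = a₂ := by ring
        rw [e₁, e₂] at hfin
        linarith
  unfold Bcand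
  have expand : ∀ (k : ℝ) (w : Fin n → ℝ),
      k ^ (-q) * (1 + ∑ i, gfun G T₁ (k * w i) ^ q)
        = k ^ (-q) + ∑ i, k ^ (-q) * gfun G T₁ (k * w i) ^ q := by
    intro k w
    rw [mul_add, mul_one, Finset.mul_sum]
  rw [expand, expand, expand, expand]
  have hsum : ∑ i, (k₁ ^ (-q) * gfun G T₁ (k₁ * max (y i) (z i)) ^ q
      + k₂ ^ (-q) * gfun G T₁ (k₂ * min (y i) (z i)) ^ q)
      ≤ ∑ i, (k₁ ^ (-q) * gfun G T₁ (k₁ * y i) ^ q + k₂ ^ (-q) * gfun G T₁ (k₂ * z i) ^ q) :=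
    Finset.sum_le_sum fun i _ => key i
  rw [Finset.sum_add_distrib, Finset.sum_add_distrib] at hsum
  linarith

/-- `B` is submodular. -/
lemma B_submod {q : ℝ} (hq : 1 ≤ q) {y z : Fin n → ℝ} (hy : ∀ i, 0 ≤ y i) (hz : ∀ i, 0 ≤ z i) :
    Bfun G T₁ q (fun i => max (y i) (z i)) + Bfun G T₁ q (fun i => min (y i) (z i)) ≤
      Bfun G T₁ q y + Bfun G T₁ q z := by
  refine _root_.le_of_forall_pos_le_add fun ε hε => ?_
  obtain ⟨ky, hky, hkyB⟩ := H.B_eps (q := q) y (half_pos hε)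
  obtain ⟨kz, hkz, hkzB⟩ := H.B_eps (q := q) z (half_pos hε)
  rcases le_total ky kz with hkk | hkk
  · have hexch := H.Bcand_exchange hq hy hky hkk (z := z)
    have h1 := H.B_le (q := q) (fun i => max (y i) (z i)) hky
    have h2 := H.B_le (q := q) (fun i => min (y i) (z i)) hkz
    linarith
  · have hexch := H.Bcand_exchange hq hz hkz hkk (z := y)
    have e1 : (fun i => max (z i) (y i)) = (fun i => max (y i) (z i)) := by
      funext i; exact max_comm _ _
    have e2 : (fun i => min (z i) (y i)) = (fun i => min (y i) (z i)) := by
      funext i; exact min_comm _ _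
    rw [e1, e2] at hexch
    have h1 := H.B_le (q := q) (fun i => max (y i) (z i)) hkz
    have h2 := H.B_le (q := q) (fun i => min (y i) (z i)) hky
    linarith

lemma Bcand_scale {q c k : ℝ} (hc : 0 < c) (hk : 0 < k) (y : Fin n → ℝ) :
    Bcand G T₁ q (c • y) k = c ^ q * Bcand G T₁ q y (k * c) := by
  unfold Bcand
  have e : ∀ i : Fin n, k * (c • y) i = (k * c) * y i := by
    intro i; simp only [Pi.smul_apply, smul_eq_mul]; ring
  rw [Finset.sum_congr rfl fun i _ => by rw [e i]]
  have e2 : (k * c) ^ (-q) = k ^ (-q) * c ^ (-q) := Real.mul_rpow hk.le hc.le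
  have e3 : c ^ q * c ^ (-q) = 1 := by
    rw [← Real.rpow_add hc]; simp
  rw [e2]
  linear_combination (-(k ^ (-q) * (1 + ∑ i, gfun G T₁ (k * c * y i) ^ q))) * e3

lemma B_scale_le {q c : ℝ} (hq : 1 ≤ q) (hc : 0 < c) (y : Fin n → ℝ) :
    Bfun G T₁ q (c • y) ≤ c ^ q * Bfun G T₁ q y := by
  have hcq : (0:ℝ) < c ^ q := Real.rpow_pos_of_pos hc q
  refine _root_.le_of_forall_pos_le_add fun ε hε => ?_
  obtain ⟨k, hk, hkB⟩ := H.B_eps (q := q) y (show 0 < ε / c ^ q by positivity)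
  have h1 : Bfun G T₁ q (c • y) ≤ Bcand G T₁ q (c • y) (k / c) :=
    H.B_le _ (by positivity)
  have h2 : Bcand G T₁ q (c • y) (k / c) = c ^ q * Bcand G T₁ q y k := by
    rw [H.Bcand_scale hc (by positivity) y, div_mul_cancel₀ _ hc.ne']
  have h3 : c ^ q * Bcand G T₁ q y k ≤ c ^ q * (Bfun G T₁ q y + ε / c ^ q) :=
    mul_le_mul_of_nonneg_left hkB.le hcq.le
  have h4 : c ^ q * (Bfun G T₁ q y + ε / c ^ q) = c ^ q * Bfun G T₁ q y + ε := by
    field_simp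
  linarith

lemma B_scale {q c : ℝ} (hq : 1 ≤ q) (hc : 0 < c) (y : Fin n → ℝ) :
    Bfun G T₁ q (c • y) = c ^ q * Bfun G T₁ q y := by
  refine le_antisymm (H.B_scale_le hq hc y) ?_
  have h := H.B_scale_le hq (c := c⁻¹) (by positivity) (c • y)
  have e : c⁻¹ • c • y = y := by
    rw [smul_smul, inv_mul_cancel₀ hc.ne', one_smul]
  rw [e] at h
  have hcq : (0:ℝ) < c ^ q := Real.rpow_pos_of_pos hc q
  have e2 : c ^ q * (c⁻¹ ^ q) = 1 := by
    rw [← Real.mul_rpow hc.le (by positivity), mul_inv_cancel₀ hc.ne', Real.one_rpow]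
  calc c ^ q * Bfun G T₁ q y ≤ c ^ q * (c⁻¹ ^ q * Bfun G T₁ q (c • y)) :=
        mul_le_mul_of_nonneg_left h hcq.le
    _ = Bfun G T₁ q (c • y) := by rw [← mul_assoc, e2, one_mul]

end Good

/-! ### Orlicz norm auxiliary lemmas -/

def OSet {n : ℕ} (G : ℝ → ℝ) (x : Fin n → ℝ) : Set ℝ :=
  {α : ℝ | 0 < α ∧ ∑ i, G (x i / α) ≤ 1}

namespace Good

variable {G : ℝ → ℝ} {T₁ : ℝ} (H : Good G T₁) {x : Fin n → ℝ}
include H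

lemma O_ne (hx : ∀ i, 0 ≤ x i) : (OSet G x).Nonempty := by
  have hcw : ContinuousWithinAt G (Set.Ici 0) 0 := H.cont 0 (Set.mem_Ici.mpr le_rfl)
  have h0 : (0:ℝ) < 1/(n+1) := by positivity
  have hev : ∀ᶠ t in nhdsWithin 0 (Set.Ici 0), G t < 1/(n+1) := by
    have htd := hcw.tendsto
    rw [H.zero] at htd
    exact htd.eventually_lt_const h0
  rw [Filter.eventually_iff, mem_nhdsGE_iff_exists_Ico_subset] at hev
  obtain ⟨u, hu, hsub⟩ := hev
  rw [Set.mem_Ioi] at hu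
  have hsum : 0 ≤ ∑ i, x i := Finset.sum_nonneg fun i _ => hx i
  set α := (1 + ∑ i, x i) / u with hα_def
  have hα : 0 < α := by positivity
  refine ⟨α, hα, ?_⟩
  have hterm : ∀ i, G (x i / α) ≤ 1/(n+1) := by
    intro i
    have h1 : x i / α < u := by
      rw [div_lt_iff₀ hα]
      have huα : u * α = 1 + ∑ j, x j := by
        rw [hα_def]; field_simp
      have hxi : x i ≤ ∑ j, x j := Finset.single_le_sum (fun j _ => hx j) (Finset.mem_univ i)
      nlinarith
    exact (hsub ⟨div_nonneg (hx i) hα.le, h1⟩).le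
  calc ∑ i, G (x i / α) ≤ ∑ _i : Fin n, 1/((n:ℝ)+1) := Finset.sum_le_sum fun i _ => hterm i
    _ = n * (1/((n:ℝ)+1)) := by
        rw [Finset.sum_const, Finset.card_univ, Fintype.card_fin, nsmul_eq_mul]
    _ ≤ 1 := by
        rw [mul_one_div, div_le_one (by positivity)]
        linarith

lemma O_upward {α β : ℝ} (hx : ∀ i, 0 ≤ x i) (hα : α ∈ OSet G x) (hβ : α ≤ β) :
    β ∈ OSet G x := by
  obtain ⟨hα0, hαs⟩ := hα
  have hβ0 : 0 < β := lt_of_lt_of_le hα0 hβ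
  refine ⟨hβ0, le_trans (Finset.sum_le_sum fun i _ => ?_) hαs⟩
  apply H.mono (Set.mem_Ici.mpr (div_nonneg (hx i) hβ0.le))
    (Set.mem_Ici.mpr (div_nonneg (hx i) hα0.le))
  gcongr
  exact hx i

lemma O_mem_gt (hx : ∀ i, 0 ≤ x i) {β : ℝ} (hβ : orliczNorm G x < β) : β ∈ OSet G x := by
  obtain ⟨α, hα, hαβ⟩ := exists_lt_of_csInf_lt (H.O_ne hx) hβ
  exact H.O_upward hx hα hαβ.le

lemma O_le_T {α : ℝ} (hx : ∀ i, 0 ≤ x i) (hα : α ∈ OSet G x) (i : Fin n) : x i ≤ α * T₁ := by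
  obtain ⟨hα0, hαs⟩ := hα
  have hterm : G (x i / α) ≤ 1 := by
    refine le_trans ?_ hαs
    exact Finset.single_le_sum (f := fun j => G (x j / α))
      (fun j _ => H.Gnn (div_nonneg (hx j) hα0.le)) (Finset.mem_univ i)
  by_contra hcon
  push_neg at hcon
  have h1 : T₁ < x i / α := by rw [lt_div_iff₀ hα0]; linarith [mul_comm α T₁]
  have h2 : G T₁ ≤ G (x i / α) :=
    H.mono (Set.mem_Ici.mpr H.T1nn) (Set.mem_Ici.mpr (H.T1nn.trans h1.le)) h1.le
  linarith [H.T1big]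

lemma orlicz_nonneg (hx : ∀ i, 0 ≤ x i) : 0 ≤ orliczNorm G x := by
  clear H
  apply Real.sInf_nonneg
  rintro α ⟨hα, _⟩
  exact hα.le

lemma orlicz_pos (hx : ∀ i, 0 ≤ x i) (hx0 : x ≠ 0) : 0 < orliczNorm G x := by
  obtain ⟨i, hi⟩ : ∃ i, x i ≠ 0 := by
    by_contra hcon
    push_neg at hcon
    exact hx0 (funext hcon)
  have hxi : 0 < x i := lt_of_le_of_ne (hx i) (Ne.symm hi)
  have hlow : x i / T₁ ≤ orliczNorm G x := by
    apply le_csInf (H.O_ne hx)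
    intro α hα
    rw [div_le_iff₀ H.T1pos]
    exact H.O_le_T hx hα i
  have : 0 < x i / T₁ := div_pos hxi H.T1pos
  linarith

lemma modular_one (hx : ∀ i, 0 ≤ x i) (hx0 : x ≠ 0) :
    ∑ i, G (x i / orliczNorm G x) = 1 := by
  set A := orliczNorm G x with hA_def
  have hA : 0 < A := H.orlicz_pos hx hx0
  set m : ℝ → ℝ := fun α => ∑ i, G (x i / α) with hm_def
  have hmcont : ContinuousOn m (Set.Ioi 0) := by
    apply continuousOn_finset_sum
    intro i _
    have hdiv : ContinuousOn (fun α : ℝ => x i / α) (Set.Ioi 0) :=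
      continuousOn_const.div continuousOn_id fun α hα => ne_of_gt hα
    apply H.cont.comp hdiv
    intro α hα
    exact Set.mem_Ici.mpr (div_nonneg (hx i) (le_of_lt hα))
  have htend : Filter.Tendsto m (nhdsWithin A (Set.Ioi 0)) (nhds (m A)) :=
    hmcont A (Set.mem_Ioi.mpr hA)
  have hup : m A ≤ 1 := by
    have hmono_filter : nhdsWithin A (Set.Ioi A) ≤ nhdsWithin A (Set.Ioi 0) :=
      nhdsWithin_mono _ (Set.Ioi_subset_Ioi hA.le)
    refine le_of_tendsto (htend.mono_left hmono_filter) ?_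
    filter_upwards [self_mem_nhdsWithin] with β hβ
    exact (H.O_mem_gt hx (Set.mem_Ioi.mp hβ)).2
  have hlo : 1 ≤ m A := by
    have hfil : nhdsWithin A (Set.Iio A) ≤ nhdsWithin A (Set.Ioi 0) := by
      refine le_inf nhdsWithin_le_nhds ?_
      rw [le_principal_iff]
      exact Filter.mem_of_superset (Ioo_mem_nhdsLT hA) Set.Ioo_subset_Ioi_self
    refine ge_of_tendsto (htend.mono_left hfil) ?_
    filter_upwards [Ioo_mem_nhdsLT hA] with β hβ
    by_contra hcon
    push_neg at hcon
    have hmem : β ∈ OSet G x := ⟨hβ.1, hcon.le⟩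
    have : A ≤ β := csInf_le ⟨0, fun γ hγ => hγ.1.le⟩ hmem
    linarith [hβ.2]
  linarith

end Good

/-! ### The supermodular envelope `F` -/

def orth (n : ℕ) : Set (Fin n → ℝ) := {y | ∀ i, 0 ≤ y i}

def Fcand (G : ℝ → ℝ) (T₁ q : ℝ) (x y : Fin n → ℝ) : ℝ :=
  (∑ i, x i * y i) - Bfun G T₁ q y

def Fset (G : ℝ → ℝ) (T₁ q : ℝ) (x : Fin n → ℝ) : Set ℝ := Fcand G T₁ q x '' orth n

def Ffun (G : ℝ → ℝ) (T₁ q : ℝ) (x : Fin n → ℝ) : ℝ := sSup (Fset G T₁ q x)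

lemma zero_mem_orth (n : ℕ) : (0 : Fin n → ℝ) ∈ orth n := fun _ => le_rfl

lemma F_ne {G : ℝ → ℝ} {T₁ q : ℝ} (x : Fin n → ℝ) : (Fset G T₁ q x).Nonempty :=
  ⟨_, Set.mem_image_of_mem _ (zero_mem_orth n)⟩

namespace Good

variable {G : ℝ → ℝ} {T₁ : ℝ} (H : Good G T₁)
include H

/-- Step (i): pairing bound against the Orlicz norm. -/
lemma pairing_le {x y : Fin n → ℝ} (hx : ∀ i, 0 ≤ x i) (hy : y ∈ orth n) {k : ℝ} (hk : 0 < k) :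
    (∑ i, x i * y i) * k ≤ orliczNorm G x * (1 + ∑ i, gfun G T₁ (k * y i)) := by
  set S := 1 + ∑ i, gfun G T₁ (k * y i) with hS_def
  have hS : 0 < S := by
    have : 0 ≤ ∑ i, gfun G T₁ (k * y i) := Finset.sum_nonneg fun i _ => H.g_nonneg _
    rw [hS_def]; linarith
  have hall : ∀ α ∈ OSet G x, (∑ i, x i * y i) * k ≤ α * S := by
    intro α hα
    have hα0 : 0 < α := hα.1
    have hterm : ∀ i, (x i / α) * (k * y i) ≤ gfun G T₁ (k * y i) + G (x i / α) := by
      intro i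
      have hdom : x i / α ∈ Set.Icc 0 (2 * T₁) := by
        constructor
        · exact div_nonneg (hx i) hα0.le
        · have := H.O_le_T hx hα i
          rw [div_le_iff₀ hα0]
          have hT := H.T1nn
          nlinarith
      have := H.young (s := k * y i) hdom
      linarith [this]
    have hsum : ∑ i, (x i / α) * (k * y i) ≤ (∑ i, gfun G T₁ (k * y i)) + ∑ i, G (x i / α) := by
      rw [← Finset.sum_add_distrib]
      exact Finset.sum_le_sum fun i _ => hterm i
    have he : ∑ i, (x i / α) * (k * y i) = (∑ i, x i * y i) * k / α := by
      rw [Finset.sum_mul, Finset.sum_div]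
      apply Finset.sum_congr rfl
      intro i _
      field_simp
    rw [he] at hsum
    have h1 : (∑ i, x i * y i) * k / α ≤ S := by
      rw [hS_def]
      linarith [hα.2]
    calc (∑ i, x i * y i) * k = ((∑ i, x i * y i) * k / α) * α := by field_simp
      _ ≤ S * α := mul_le_mul_of_nonneg_right h1 hα0.le
      _ = α * S := mul_comm _ _
  have hlow : (∑ i, x i * y i) * k / S ≤ orliczNorm G x := by
    apply le_csInf (H.O_ne hx)
    intro α hα
    rw [div_le_iff₀ hS]
    exact hall α hα
  calc (∑ i, x i * y i) * k = ((∑ i, x i * y i) * k / S) * S := by field_simp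
    _ ≤ orliczNorm G x * S := mul_le_mul_of_nonneg_right hlow hS.le

/-- Step (ii)+(iii): each candidate in the definition of `F` is bounded. -/
lemma Fcand_le {q p : ℝ} (hq1 : 1 < q) (hpq : (p - 1) * q = p) (hp1 : 1 < p)
    {x : Fin n → ℝ} (hx : ∀ i, 0 ≤ x i) (hx0 : x ≠ 0) {y : Fin n → ℝ} (hy : y ∈ orth n) :
    Fcand G T₁ q x y ≤ ((n : ℝ) + 1) * orliczNorm G x ^ p := by
  set A := orliczNorm G x with hA_def
  have hA : 0 < A := H.orlicz_pos hx hx0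
  set R := ∑ i, x i * y i with hR_def
  have hR : 0 ≤ R := Finset.sum_nonneg fun i _ => mul_nonneg (hx i) (hy i)
  set D := A ^ q * ((n : ℝ) + 1) ^ (q - 1) with hD_def
  have hD : 0 < D := by
    have := Real.rpow_pos_of_pos hA q
    have : (0:ℝ) < ((n:ℝ) + 1) ^ (q - 1) := Real.rpow_pos_of_pos (by positivity) _
    positivity
  -- B y ≥ R^q / D
  have hBlow : R ^ q / D ≤ Bfun G T₁ q y := by
    apply le_csInf (H.B_ne y)
    rintro _ ⟨k, hk, rfl⟩
    rw [Set.mem_Ioi] at hk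
    set gsum := ∑ i, gfun G T₁ (k * y i) with hgsum_def
    have hgsum : 0 ≤ gsum := Finset.sum_nonneg fun i _ => H.g_nonneg _
    have hpm : (1 + gsum) ^ q ≤ ((n : ℝ) + 1) ^ (q - 1) * (1 + ∑ i, gfun G T₁ (k * y i) ^ q) := by
      have hpm0 := pm (Fin.cons 1 fun i => gfun G T₁ (k * y i))
        (fun i => by
          refine Fin.cases ?_ ?_ i
          · rw [Fin.cons_zero]; norm_num
          · intro j; rw [Fin.cons_succ]; exact H.g_nonneg _)
        hq1.le
      rw [Fin.sum_cons] at hpm0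
      have e : ∑ i : Fin (n+1), Fin.cons (1:ℝ) (fun j => gfun G T₁ (k * y j)) i ^ q
          = 1 + ∑ i, gfun G T₁ (k * y i) ^ q := by
        rw [Fin.sum_univ_succ]
        simp only [Fin.cons_zero, Fin.cons_succ, Real.one_rpow]
      rw [e] at hpm0
      push_cast at hpm0
      exact hpm0
    have hRk : R * k / A ≤ 1 + gsum := by
      have := H.pairing_le hx hy hk
      rw [← hR_def, ← hgsum_def] at this
      rw [div_le_iff₀ hA]
      linarith [this, mul_comm A (1 + gsum)]
    have hmono : (R * k / A) ^ q ≤ (1 + gsum) ^ q :=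
      Real.rpow_le_rpow (by positivity) hRk (by linarith)
    have hchain : (R * k / A) ^ q ≤ ((n : ℝ) + 1) ^ (q - 1) * (1 + ∑ i, gfun G T₁ (k * y i) ^ q) :=
      le_trans hmono hpm
    -- Bcand = k^{-q} (1 + Σ g^q) ≥ k^{-q} (Rk/A)^q / (n+1)^{q-1} = R^q / D
    unfold Bcand
    have hnp : (0:ℝ) < ((n:ℝ) + 1) ^ (q - 1) := Real.rpow_pos_of_pos (by positivity) _
    have hkq : (0:ℝ) < k ^ (-q) := Real.rpow_pos_of_pos hk _
    have h1 : k ^ (-q) * ((R * k / A) ^ q / ((n:ℝ) + 1) ^ (q - 1))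
        ≤ k ^ (-q) * (1 + ∑ i, gfun G T₁ (k * y i) ^ q) := by
      apply mul_le_mul_of_nonneg_left _ hkq.le
      rw [div_le_iff₀ hnp]
      calc (R * k / A) ^ q ≤ ((n : ℝ) + 1) ^ (q - 1) * (1 + ∑ i, gfun G T₁ (k * y i) ^ q)
          := hchain
        _ = (1 + ∑ i, gfun G T₁ (k * y i) ^ q) * ((n:ℝ) + 1) ^ (q - 1) := mul_comm _ _
    refine le_trans (le_of_eq ?_) h1
    -- R^q / D = k^{-q} * ((Rk/A)^q / (n+1)^{q-1})
    rw [hD_def]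
    rw [Real.div_rpow (by positivity) hA.le, Real.mul_rpow hR hk.le]
    rw [Real.rpow_neg hk.le]
    field_simp
  -- final case split
  have hfinal : R - R ^ q / D ≤ D ^ (p - 1) := by
    rcases le_or_gt R (D ^ (p-1)) with h | h
    · have : 0 ≤ R ^ q / D := by positivity
      linarith
    · have hRpos : 0 < R := lt_of_le_of_lt (by positivity) h
      have hq_sub : 0 < q - 1 := by linarith
      have hstrict : D < R ^ (q - 1) := by
        have := Real.rpow_lt_rpow (by positivity : (0:ℝ) ≤ D ^ (p-1)) h hq_sub
        rw [← Real.rpow_mul hD.le] at this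
        have e : (p - 1) * (q - 1) = 1 := by linear_combination hpq
        rw [e, Real.rpow_one] at this
        exact this
      have hgt : R < R ^ q / D := by
        rw [lt_div_iff₀ hD]
        calc R * D < R * R ^ (q - 1) := by
              exact mul_lt_mul_of_pos_left hstrict hRpos
          _ = R ^ q := by
              have e := Real.rpow_add hRpos 1 (q - 1)
              rw [show (1:ℝ) + (q - 1) = q by ring, Real.rpow_one] at e
              exact e.symm
      have : (0:ℝ) ≤ D ^ (p-1) := by positivity
      linarith
  have hDp : D ^ (p - 1) = ((n : ℝ) + 1) * A ^ p := by
    rw [hD_def, Real.mul_rpow (by positivity) (by positivity)]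
    rw [← Real.rpow_mul hA.le, ← Real.rpow_mul (by positivity : (0:ℝ) ≤ (n:ℝ)+1)]
    have e1 : q * (p - 1) = p := by linear_combination hpq
    have e2 : (q - 1) * (p - 1) = 1 := by linear_combination hpq
    rw [e1, e2, Real.rpow_one]
    ring
  unfold Fcand
  rw [hDp] at hfinal
  linarith

lemma F_bdd {q p : ℝ} (hq1 : 1 < q) (hpq : (p - 1) * q = p) (hp1 : 1 < p)
    {x : Fin n → ℝ} (hx : ∀ i, 0 ≤ x i) : BddAbove (Fset G T₁ q x) := by
  rcases eq_or_ne x 0 with rfl | hx0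
  · refine ⟨0, ?_⟩
    rintro _ ⟨y, hy, rfl⟩
    unfold Fcand
    have h1 : ∑ i, (0 : Fin n → ℝ) i * y i = 0 := by simp
    have h2 := H.B_nonneg (q := q) y
    rw [h1]
    linarith
  · refine ⟨((n : ℝ) + 1) * orliczNorm G x ^ p, ?_⟩
    rintro _ ⟨y, hy, rfl⟩
    exact H.Fcand_le hq1 hpq hp1 hx hx0 hy

lemma F_le {q p : ℝ} (hq1 : 1 < q) (hpq : (p - 1) * q = p) (hp1 : 1 < p)
    {x : Fin n → ℝ} (hx : ∀ i, 0 ≤ x i) (hx0 : x ≠ 0) :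
    Ffun G T₁ q x ≤ ((n : ℝ) + 1) * orliczNorm G x ^ p := by
  apply csSup_le (F_ne x)
  rintro _ ⟨y, hy, rfl⟩
  exact H.Fcand_le hq1 hpq hp1 hx hx0 hy

lemma F_nonneg {q p : ℝ} (hq : 1 ≤ q) (hq1 : 1 < q) (hpq : (p - 1) * q = p) (hp1 : 1 < p)
    {x : Fin n → ℝ} (hx : ∀ i, 0 ≤ x i) : 0 ≤ Ffun G T₁ q x := by
  have hmem : Fcand G T₁ q x 0 ∈ Fset G T₁ q x := Set.mem_image_of_mem _ (zero_mem_orth n)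
  have he : Fcand G T₁ q x (0 : Fin n → ℝ) = 0 := by
    unfold Fcand
    rw [H.B_zero hq]
    simp
  have := le_csSup (H.F_bdd hq1 hpq hp1 hx) hmem
  rw [he] at this
  exact this

lemma F_zero {q p : ℝ} (hq : 1 ≤ q) (hq1 : 1 < q) (hpq : (p - 1) * q = p) (hp1 : 1 < p) :
    Ffun G T₁ q (0 : Fin n → ℝ) = 0 := by
  refine le_antisymm ?_ (H.F_nonneg hq hq1 hpq hp1 fun i => le_rfl)
  apply csSup_le (F_ne 0)
  rintro _ ⟨y, hy, rfl⟩
  unfold Fcand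
  have h1 : ∑ i, (0 : Fin n → ℝ) i * y i = 0 := by simp
  have h2 := H.B_nonneg (q := q) y
  rw [h1]
  linarith

lemma F_mono {q p : ℝ} (hq1 : 1 < q) (hpq : (p - 1) * q = p) (hp1 : 1 < p)
    {x₁ x₂ : Fin n → ℝ} (hx₁ : ∀ i, 0 ≤ x₁ i) (hle : ∀ i, x₁ i ≤ x₂ i) :
    Ffun G T₁ q x₁ ≤ Ffun G T₁ q x₂ := by
  have hx₂ : ∀ i, 0 ≤ x₂ i := fun i => (hx₁ i).trans (hle i)
  apply csSup_le (F_ne x₁)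
  rintro _ ⟨y, hy, rfl⟩
  have h1 : Fcand G T₁ q x₁ y ≤ Fcand G T₁ q x₂ y := by
    unfold Fcand
    have : ∑ i, x₁ i * y i ≤ ∑ i, x₂ i * y i :=
      Finset.sum_le_sum fun i _ => mul_le_mul_of_nonneg_right (hle i) (hy i)
    linarith
  exact h1.trans (le_csSup (H.F_bdd hq1 hpq hp1 hx₂) (Set.mem_image_of_mem _ hy))

lemma Fcand_smul {q p c : ℝ} (hq : 1 ≤ q) (hpq : (p - 1) * q = p) (hc : 0 < c)
    (x z : Fin n → ℝ) :
    Fcand G T₁ q (c • x) ((c ^ (p-1)) • z) = c ^ p * Fcand G T₁ q x z := by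
  unfold Fcand
  have hcc : c * c ^ (p-1) = c ^ p := by
    have e := Real.rpow_add hc 1 (p-1)
    rw [show (1:ℝ) + (p-1) = p by ring, Real.rpow_one] at e
    exact e.symm
  have e1 : ∑ i, (c • x) i * ((c ^ (p-1)) • z) i = c ^ p * ∑ i, x i * z i := by
    rw [Finset.mul_sum]
    apply Finset.sum_congr rfl
    intro i _
    simp only [Pi.smul_apply, smul_eq_mul]
    linear_combination (x i * z i) * hcc
  have e2 : Bfun G T₁ q ((c ^ (p-1)) • z) = c ^ p * Bfun G T₁ q z := by
    rw [H.B_scale hq (Real.rpow_pos_of_pos hc _) z, ← Real.rpow_mul hc.le, hpq]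
  rw [e1, e2]
  ring

lemma F_smul {q p c : ℝ} (hq : 1 ≤ q) (hpq : (p - 1) * q = p) (hc : 0 < c) (x : Fin n → ℝ) :
    Ffun G T₁ q (c • x) = c ^ p * Ffun G T₁ q x := by
  have hcp : (0:ℝ) < c ^ (p-1) := Real.rpow_pos_of_pos hc _
  have hcpp : (0:ℝ) < c ^ p := Real.rpow_pos_of_pos hc _
  have hset : Fset G T₁ q (c • x) = (c ^ p) • Fset G T₁ q x := by
    ext a
    constructor
    · rintro ⟨y, hy, rfl⟩
      set z := (c ^ (p-1))⁻¹ • y with hz_def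
      have hz : z ∈ orth n := fun i => by
        rw [hz_def]
        simp only [Pi.smul_apply, smul_eq_mul]
        exact mul_nonneg (by positivity) (hy i)
      have hyz : (c ^ (p-1)) • z = y := by
        rw [hz_def, smul_smul, mul_inv_cancel₀ hcp.ne', one_smul]
      refine ⟨Fcand G T₁ q x z, Set.mem_image_of_mem _ hz, ?_⟩
      simp only [smul_eq_mul]
      rw [← H.Fcand_smul hq hpq hc x z, hyz]
    · rintro ⟨_, ⟨z, hz, rfl⟩, rfl⟩
      refine ⟨(c ^ (p-1)) • z, fun i => ?_, ?_⟩
      · simp only [Pi.smul_apply, smul_eq_mul]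
        exact mul_nonneg hcp.le (hz i)
      · simp only [smul_eq_mul]
        rw [H.Fcand_smul hq hpq hc x z]
  unfold Ffun
  rw [hset, Real.sSup_smul_of_nonneg hcpp.le _, smul_eq_mul]

lemma F_super {q p : ℝ} (hq : 1 ≤ q) (hq1 : 1 < q) (hpq : (p - 1) * q = p) (hp1 : 1 < p)
    {u v w : Fin n → ℝ} (hu : ∀ i, 0 ≤ u i) (hv : ∀ i, 0 ≤ v i) (hw : ∀ i, 0 ≤ w i) :
    Ffun G T₁ q (u + v) + Ffun G T₁ q (u + w) ≤ Ffun G T₁ q (u + v + w) + Ffun G T₁ q u := by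
  refine _root_.le_of_forall_pos_le_add fun ε hε => ?_
  have hε2 : 0 < ε/2 := half_pos hε
  obtain ⟨cb, ⟨yb, hyb, rfl⟩, hcb⟩ := exists_lt_of_lt_csSup (F_ne (u+v))
    (show Ffun G T₁ q (u + v) - ε/2 < Ffun G T₁ q (u + v) by linarith)
  obtain ⟨ca, ⟨ya, hya, rfl⟩, hca⟩ := exists_lt_of_lt_csSup (F_ne (u+w))
    (show Ffun G T₁ q (u + w) - ε/2 < Ffun G T₁ q (u + w) by linarith)
  have hsub := H.B_submod hq (y := ya) (z := yb) hya hyb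
  have hYo : (fun i => max (ya i) (yb i)) ∈ orth n :=
    fun i => le_trans (hya i) (le_max_left _ _)
  have hZo : (fun i => min (ya i) (yb i)) ∈ orth n := fun i => le_min (hya i) (hyb i)
  have huvw : ∀ i, 0 ≤ (u + v + w) i := fun i => by
    have h1 := hu i; have h2 := hv i; have h3 := hw i
    simp only [Pi.add_apply]; linarith
  have hF1 : Fcand G T₁ q (u+v+w) (fun i => max (ya i) (yb i)) ≤ Ffun G T₁ q (u+v+w) :=
    le_csSup (H.F_bdd hq1 hpq hp1 huvw) (Set.mem_image_of_mem _ hYo)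
  have hF2 : Fcand G T₁ q u (fun i => min (ya i) (yb i)) ≤ Ffun G T₁ q u :=
    le_csSup (H.F_bdd hq1 hpq hp1 hu) (Set.mem_image_of_mem _ hZo)
  have hcoord : ∑ i, (u+v) i * yb i + ∑ i, (u+w) i * ya i
      ≤ ∑ i, (u+v+w) i * max (ya i) (yb i) + ∑ i, u i * min (ya i) (yb i) := by
    rw [← Finset.sum_add_distrib, ← Finset.sum_add_distrib]
    apply Finset.sum_le_sum
    intro i _
    simp only [Pi.add_apply]
    rcases le_total (ya i) (yb i) with h | h
    · rw [max_eq_right h, min_eq_left h]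
      nlinarith [mul_le_mul_of_nonneg_left h (hw i)]
    · rw [max_eq_left h, min_eq_right h]
      nlinarith [mul_le_mul_of_nonneg_left h (hv i)]
  unfold Fcand at hcb hca hF1 hF2
  linarith

lemma F_lower {q p : ℝ} (hq : 1 ≤ q) (hq1 : 1 < q) (hq2 : q ≤ 2)
    (hpq : (p - 1) * q = p) (hp1 : 1 < p)
    {x : Fin n → ℝ} (hx : ∀ i, 0 ≤ x i) (hx0 : x ≠ 0) :
    (orliczNorm G x / 10) ^ p ≤ Ffun G T₁ q x := by
  set A := orliczNorm G x with hA_def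
  have hA : 0 < A := H.orlicz_pos hx hx0
  have hA10 : 0 < A / 10 := by positivity
  set z : Fin n → ℝ := fun i => x i / A with hz_def
  have hz : ∀ i, 0 ≤ z i := fun i => div_nonneg (hx i) hA.le
  have hmod : ∑ i, G (z i) = 1 := H.modular_one hx hx0
  have hΔ : ∀ i, 0 ≤ G (2 * z i) - G (z i) := fun i => by
    have h1 := hz i
    have := H.mono (Set.mem_Ici.mpr h1) (Set.mem_Ici.mpr (show (0:ℝ) ≤ 2 * z i by linarith))
      (show z i ≤ 2 * z i by linarith)
    linarith
  set W := ∑ i, (G (2 * z i) - G (z i)) with hW_def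
  have hW1 : 1 ≤ W := by
    rw [hW_def, ← hmod]
    apply Finset.sum_le_sum
    intro i _
    have := H.G_double (hz i)
    linarith
  have hW0 : 0 < W := by linarith
  set y : Fin n → ℝ := fun i => (G (2 * z i) - G (z i)) / z i with hy_def
  have hynn : ∀ i, 0 ≤ y i := fun i => div_nonneg (hΔ i) (hz i)
  have hzy : ∀ i, z i * y i = G (2 * z i) - G (z i) := by
    intro i
    rcases eq_or_lt_of_le (hz i) with h0 | h0
    · rw [hy_def]
      simp only
      rw [← h0, mul_zero]
      norm_num [H.zero]
    · rw [hy_def]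
      simp only
      field_simp
  have hzT : ∀ i, 0 < z i → z i ≤ T₁ := by
    intro i hzi
    have hterm : G (z i) ≤ 1 := by
      rw [← hmod]
      exact Finset.single_le_sum (f := fun j => G (z j))
        (fun j _ => H.Gnn (hz j)) (Finset.mem_univ i)
    by_contra hcon
    push_neg at hcon
    have := H.mono (Set.mem_Ici.mpr H.T1nn) (Set.mem_Ici.mpr (hz i)) hcon.le
    linarith [H.T1big]
  have hchord : ∀ i, gfun G T₁ (y i) ≤ 2 * (G (2 * z i) - G (z i)) := by
    intro i
    rcases eq_or_lt_of_le (hz i) with h0 | h0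
    · rw [hy_def]
      simp only
      rw [← h0]
      norm_num [H.zero, H.g_zero]
    · exact H.g_chord h0 (by linarith [hzT i h0])
  have hsum_xy : ∑ i, x i * y i = A * W := by
    rw [hW_def, Finset.mul_sum]
    apply Finset.sum_congr rfl
    intro i _
    rw [← hzy i, hz_def]
    simp only
    field_simp
  set r : ℝ := (A/10) ^ (p-1) / W with hr_def
  have hr : 0 < r := div_pos (Real.rpow_pos_of_pos hA10 _) hW0
  have hrW : r * W = (A/10) ^ (p-1) := div_mul_cancel₀ _ hW0.ne'
  have hrW0 : 0 < r * W := by positivity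
  set k : ℝ := (r * W)⁻¹ with hk_def
  have hk : 0 < k := by positivity
  have hbc : Bcand G T₁ q (r • y) k ≤ 5 * (r * W) ^ q := by
    unfold Bcand
    have earg : ∀ i, k * (r • y) i = y i / W := by
      intro i
      rw [hk_def]
      simp only [Pi.smul_apply, smul_eq_mul]
      field_simp
    have hkq : k ^ (-q) = (r * W) ^ q := by
      rw [hk_def, Real.inv_rpow hrW0.le, Real.rpow_neg hrW0.le, inv_inv]
    have hWinv1 : W⁻¹ ≤ 1 := by
      rw [inv_le_one₀ hW0]
      exact hW1
    have hsum_le : ∑ i, gfun G T₁ (k * (r • y) i) ^ q ≤ 4 := by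
      have hterm : ∀ i, gfun G T₁ (k * (r • y) i) ^ q
          ≤ (2 * (G (2 * z i) - G (z i)) / W) ^ q := by
        intro i
        rw [earg i]
        apply Real.rpow_le_rpow (H.g_nonneg _) _ (by linarith)
        have hsc := H.g_scale (c := W⁻¹) (s := y i) (by positivity) hWinv1
        have he : W⁻¹ * y i = y i / W := by rw [div_eq_inv_mul]
        rw [he] at hsc
        calc gfun G T₁ (y i / W) ≤ W⁻¹ * gfun G T₁ (y i) := hsc
          _ ≤ W⁻¹ * (2 * (G (2 * z i) - G (z i))) :=
              mul_le_mul_of_nonneg_left (hchord i) (by positivity)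
          _ = 2 * (G (2 * z i) - G (z i)) / W := (div_eq_inv_mul _ _).symm
      have hsum2 : ∑ i, (2 * (G (2 * z i) - G (z i)) / W) ^ q
          ≤ (∑ i, 2 * (G (2 * z i) - G (z i)) / W) ^ q :=
        sum_rpow_le _ _ (fun i _ => by have := hΔ i; positivity) hq
      have hval : ∑ i, 2 * (G (2 * z i) - G (z i)) / W = 2 := by
        rw [← Finset.sum_div]
        rw [show ∑ i, 2 * (G (2 * z i) - G (z i)) = 2 * W by rw [hW_def, Finset.mul_sum]]
        field_simp
      have h2q : (2:ℝ) ^ q ≤ 4 := by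
        have h1 : (2:ℝ) ^ q ≤ (2:ℝ) ^ (2:ℝ) :=
          Real.rpow_le_rpow_of_exponent_le one_le_two hq2
        have h2 : (2:ℝ) ^ (2:ℝ) = 4 := by
          rw [show (2:ℝ) = ((2:ℕ):ℝ) from by norm_num, Real.rpow_natCast]
          norm_num
        linarith
      calc ∑ i, gfun G T₁ (k * (r • y) i) ^ q
          ≤ ∑ i, (2 * (G (2 * z i) - G (z i)) / W) ^ q :=
            Finset.sum_le_sum fun i _ => hterm i
        _ ≤ (∑ i, 2 * (G (2 * z i) - G (z i)) / W) ^ q := hsum2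
        _ = (2:ℝ) ^ q := by rw [hval]
        _ ≤ 4 := h2q
    have hrWq : (0:ℝ) ≤ (r * W) ^ q := Real.rpow_nonneg hrW0.le q
    calc k ^ (-q) * (1 + ∑ i, gfun G T₁ (k * (r • y) i) ^ q)
        ≤ (r * W) ^ q * (1 + 4) := by
          rw [hkq]
          exact mul_le_mul_of_nonneg_left (by linarith) hrWq
      _ = 5 * (r * W) ^ q := by ring
  have hy'o : (r • y) ∈ orth n := fun i => by
    simp only [Pi.smul_apply, smul_eq_mul]
    exact mul_nonneg hr.le (hynn i)
  have hfc : r * (A * W) - 5 * (r * W) ^ q ≤ Fcand G T₁ q x (r • y) := by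
    unfold Fcand
    have he : ∑ i, x i * (r • y) i = r * (A * W) := by
      rw [← hsum_xy, Finset.mul_sum]
      apply Finset.sum_congr rfl
      intro i _
      simp only [Pi.smul_apply, smul_eq_mul]
      ring
    have hB := le_trans (H.B_le (r • y) hk) hbc
    linarith
  have hmem : Fcand G T₁ q x (r • y) ≤ Ffun G T₁ q x :=
    le_csSup (H.F_bdd hq1 hpq hp1 hx) (Set.mem_image_of_mem _ hy'o)
  have hexp : (r * W) ^ q = (A/10) ^ p := by
    rw [hrW, ← Real.rpow_mul hA10.le, hpq]
  have hrAW : r * (A * W) = 10 * (A/10) ^ p := by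
    have e := Real.rpow_add hA10 (p-1) 1
    rw [show (p-1) + 1 = p by ring, Real.rpow_one] at e
    have e2 : r * (A * W) = (r * W) * A := by ring
    rw [e2, hrW, e]
    ring
  have hpos : 0 ≤ (A/10) ^ p := by positivity
  have hfin : (A/10) ^ p ≤ r * (A * W) - 5 * (r * W) ^ q := by
    rw [hrAW, hexp]
    linarith
  linarith

lemma F_combine {q p : ℝ} (hq : 1 ≤ q) (hq1 : 1 < q) (hpq : (p - 1) * q = p) (hp1 : 1 < p)
    {a b : Fin n → ℝ} (ha : ∀ i, 0 ≤ a i) (hb : ∀ i, 0 ≤ b i) {θ : ℝ}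
    (hθ0 : 0 < θ) (hθ1 : θ < 1) :
    Ffun G T₁ q (a + b) ≤ θ ^ (1-p) * Ffun G T₁ q a + (1-θ) ^ (1-p) * Ffun G T₁ q b := by
  have hθ1' : 0 < 1 - θ := by linarith
  apply csSup_le (F_ne _)
  rintro _ ⟨y, hy, rfl⟩
  have key : Fcand G T₁ q (a+b) y
      = θ * Fcand G T₁ q (θ⁻¹ • a) y + (1-θ) * Fcand G T₁ q ((1-θ)⁻¹ • b) y := by
    unfold Fcand
    have e1 : ∑ i, (a+b) i * y i
        = θ * ∑ i, (θ⁻¹ • a) i * y i + (1-θ) * ∑ i, ((1-θ)⁻¹ • b) i * y i := by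
      rw [Finset.mul_sum, Finset.mul_sum, ← Finset.sum_add_distrib]
      apply Finset.sum_congr rfl
      intro i _
      simp only [Pi.add_apply, Pi.smul_apply, smul_eq_mul]
      field_simp
    rw [e1]
    ring
  rw [key]
  have hmem1 : ∀ i, 0 ≤ (θ⁻¹ • a) i := fun i => by
    simp only [Pi.smul_apply, smul_eq_mul]
    exact mul_nonneg (by positivity) (ha i)
  have hmem2 : ∀ i, 0 ≤ ((1-θ)⁻¹ • b) i := fun i => by
    simp only [Pi.smul_apply, smul_eq_mul]
    exact mul_nonneg (by positivity) (hb i)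
  have h1 : Fcand G T₁ q (θ⁻¹ • a) y ≤ Ffun G T₁ q (θ⁻¹ • a) :=
    le_csSup (H.F_bdd hq1 hpq hp1 hmem1) (Set.mem_image_of_mem _ hy)
  have h2 : Fcand G T₁ q ((1-θ)⁻¹ • b) y ≤ Ffun G T₁ q ((1-θ)⁻¹ • b) :=
    le_csSup (H.F_bdd hq1 hpq hp1 hmem2) (Set.mem_image_of_mem _ hy)
  have hs1 : Ffun G T₁ q (θ⁻¹ • a) = (θ⁻¹) ^ p * Ffun G T₁ q a :=
    H.F_smul hq hpq (by positivity) a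
  have hs2 : Ffun G T₁ q ((1-θ)⁻¹ • b) = ((1-θ)⁻¹) ^ p * Ffun G T₁ q b :=
    H.F_smul hq hpq (by positivity) b
  have hid : ∀ t : ℝ, 0 < t → t * (t⁻¹) ^ p = t ^ (1-p) := by
    intro t ht
    rw [Real.inv_rpow ht.le, ← Real.rpow_neg ht.le]
    have e := Real.rpow_add ht 1 (-p)
    rw [show (1:ℝ) + -p = 1 - p by ring, Real.rpow_one] at e
    exact e.symm
  calc θ * Fcand G T₁ q (θ⁻¹ • a) y + (1-θ) * Fcand G T₁ q ((1-θ)⁻¹ • b) y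
      ≤ θ * Ffun G T₁ q (θ⁻¹ • a) + (1-θ) * Ffun G T₁ q ((1-θ)⁻¹ • b) := by
        have ha1 := mul_le_mul_of_nonneg_left h1 hθ0.le
        have hb1 := mul_le_mul_of_nonneg_left h2 hθ1'.le
        linarith
    _ = θ ^ (1-p) * Ffun G T₁ q a + (1-θ) ^ (1-p) * Ffun G T₁ q b := by
        rw [hs1, hs2, ← mul_assoc, ← mul_assoc, hid θ hθ0, hid (1-θ) hθ1']

/-- Main construction lemma. -/
lemma main {q p : ℝ} (hq1 : 1 < q) (hq2 : q ≤ 2) (hpq : (p - 1) * q = p) (hp1 : 1 < p)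
    (hcard : ((n:ℝ) + 1) ^ (1/p) ≤ 2) :
    ∃ M : (Fin n → ℝ) → ℝ, IsMonotoneNorm M ∧ IsPSupermodular M p ∧
      ∀ x : Fin n → ℝ, 0 ≤ x → orliczNorm G x ≤ M x ∧ M x ≤ 20 * orliczNorm G x := by
  have hq : 1 ≤ q := hq1.le
  have hp0 : 0 < p := by linarith
  have hip : 0 < 1/p := by positivity
  set Fa : (Fin n → ℝ) → ℝ := Ffun G T₁ q with hFa_def
  set M : (Fin n → ℝ) → ℝ := fun x => 10 * (Fa (fun i => |x i|)) ^ (1/p) with hM_def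
  have habs : ∀ x : Fin n → ℝ, ∀ i, 0 ≤ |x i| := fun x i => abs_nonneg _
  have habs_eq : ∀ x : Fin n → ℝ, (0:Fin n → ℝ) ≤ x → (fun i => |x i|) = x := by
    intro x hx; funext i; exact abs_of_nonneg (by simpa using hx i)
  have hFnn : ∀ x : Fin n → ℝ, (∀ i, 0 ≤ x i) → 0 ≤ Fa x :=
    fun x hx => H.F_nonneg hq hq1 hpq hp1 hx
  have hroundtrip : ∀ t : ℝ, 0 ≤ t → (t ^ p) ^ (1/p) = t := by
    intro t ht
    rw [← Real.rpow_mul ht, mul_one_div_cancel hp0.ne', Real.rpow_one]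
  have hroundtrip2 : ∀ t : ℝ, 0 ≤ t → (t ^ (1/p)) ^ p = t := by
    intro t ht
    rw [← Real.rpow_mul ht, one_div_mul_cancel hp0.ne', Real.rpow_one]
  have hFpos : ∀ x : Fin n → ℝ, (∀ i, 0 ≤ x i) → x ≠ 0 → 0 < Fa x := by
    intro x hx hx0
    have h1 := H.F_lower hq hq1 hq2 hpq hp1 hx hx0
    have h2 : 0 < orliczNorm G x := H.orlicz_pos hx hx0
    have h3 : (0:ℝ) < (orliczNorm G x / 10) ^ p := Real.rpow_pos_of_pos (by positivity) p
    linarith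
  have hsub : ∀ a b : Fin n → ℝ, (∀ i, 0 ≤ a i) → (∀ i, 0 ≤ b i) →
      (Fa (a + b)) ^ (1/p) ≤ (Fa a) ^ (1/p) + (Fa b) ^ (1/p) := by
    intro a b ha hb
    rcases eq_or_ne a 0 with rfl | ha0
    · rw [zero_add]
      have h1 := Real.rpow_nonneg (hFnn b hb) (1/p)
      have hz : Fa (0:Fin n → ℝ) = 0 := H.F_zero hq hq1 hpq hp1
      rw [hz, Real.zero_rpow (by positivity : (1:ℝ)/p ≠ 0), zero_add]
    rcases eq_or_ne b 0 with rfl | hb0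
    · rw [add_zero]
      have hz : Fa (0:Fin n → ℝ) = 0 := H.F_zero hq hq1 hpq hp1
      rw [hz, Real.zero_rpow (by positivity : (1:ℝ)/p ≠ 0), add_zero]
    have hFa0 : 0 < Fa a := hFpos a ha ha0
    have hFb0 : 0 < Fa b := hFpos b hb hb0
    set A' := (Fa a) ^ (1/p) with hA'_def
    set B' := (Fa b) ^ (1/p) with hB'_def
    have hA'0 : 0 < A' := Real.rpow_pos_of_pos hFa0 _
    have hB'0 : 0 < B' := Real.rpow_pos_of_pos hFb0 _
    set Z := A' + B' with hZ_def
    have hZ0 : 0 < Z := by positivity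
    set θ := A' / Z with hθ_def
    have hθ0 : 0 < θ := by positivity
    have hθ1 : θ < 1 := by
      rw [hθ_def, div_lt_one hZ0]
      linarith
    have hcomb := H.F_combine hq hq1 hpq hp1 ha hb hθ0 hθ1
    have hAp : A' ^ p = Fa a := hroundtrip2 _ hFa0.le
    have hBp : B' ^ p = Fa b := hroundtrip2 _ hFb0.le
    have hterm1 : θ ^ (1-p) * Fa a = θ * Z ^ p := by
      have e1 : θ ^ (1-p) = θ * θ ^ (-p) := by
        have e := Real.rpow_add hθ0 1 (-p)
        rw [show (1:ℝ) + -p = 1 - p by ring, Real.rpow_one] at e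
        exact e
      have e2 : θ ^ (-p) = Z ^ p / Fa a := by
        rw [hθ_def, Real.rpow_neg (by positivity), Real.div_rpow hA'0.le hZ0.le, hAp, inv_div]
      rw [e1, e2]
      field_simp
    have h1θ : 1 - θ = B' / Z := by
      rw [hθ_def, hZ_def]
      field_simp
      ring
    have h1θ0 : 0 < 1 - θ := by linarith
    have hterm2 : (1-θ) ^ (1-p) * Fa b = (1-θ) * Z ^ p := by
      have e1 : (1-θ) ^ (1-p) = (1-θ) * (1-θ) ^ (-p) := by
        have e := Real.rpow_add h1θ0 1 (-p)
        rw [show (1:ℝ) + -p = 1 - p by ring, Real.rpow_one] at e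
        exact e
      have e2 : (1-θ) ^ (-p) = Z ^ p / Fa b := by
        rw [h1θ, Real.rpow_neg (by positivity), Real.div_rpow hB'0.le hZ0.le, hBp, inv_div]
      rw [e1, e2]
      field_simp
    have hZp : Fa (a+b) ≤ Z ^ p := by
      rw [hterm1, hterm2] at hcomb
      nlinarith [hcomb]
    calc (Fa (a+b)) ^ (1/p) ≤ (Z ^ p) ^ (1/p) := by
          apply Real.rpow_le_rpow _ hZp hip.le
          apply hFnn
          intro i
          have h1 := ha i; have h2 := hb i
          simp only [Pi.add_apply]
          linarith
      _ = Z := hroundtrip _ hZ0.le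
  have hMp : ∀ x : Fin n → ℝ, (0:Fin n → ℝ) ≤ x → M x ^ p = 10 ^ p * Fa x := by
    intro x hx
    have hx' : ∀ i, 0 ≤ x i := fun i => by simpa using hx i
    simp only [hM_def]
    rw [habs_eq x hx]
    rw [Real.mul_rpow (by norm_num) (Real.rpow_nonneg (hFnn x hx') _)]
    rw [hroundtrip2 _ (hFnn x hx')]
  refine ⟨M, ⟨?_, ?_, ?_, ?_⟩, ?_, ?_⟩
  · -- triangle
    intro x y
    simp only [hM_def]
    have h1 : Fa (fun i => |(x+y) i|) ≤ Fa ((fun i => |x i|) + (fun i => |y i|)) := by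
      apply H.F_mono hq1 hpq hp1 (fun i => abs_nonneg _)
      intro i
      simp only [Pi.add_apply]
      exact abs_add_le _ _
    have h2 := hsub (fun i => |x i|) (fun i => |y i|) (habs x) (habs y)
    have h3 : (Fa (fun i => |(x+y) i|)) ^ (1/p)
        ≤ (Fa ((fun i => |x i|) + (fun i => |y i|))) ^ (1/p) :=
      Real.rpow_le_rpow (hFnn _ (habs (x+y))) h1 hip.le
    linarith
  · -- homogeneity
    intro c x
    rcases eq_or_ne c 0 with rfl | hc
    · simp only [hM_def, zero_smul, abs_zero, zero_mul]
      have he : (fun i : Fin n => |(0:Fin n → ℝ) i|) = (0:Fin n → ℝ) := by funext i; simp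
      have hz : Fa (0:Fin n → ℝ) = 0 := H.F_zero hq hq1 hpq hp1
      rw [he, hz, Real.zero_rpow (by positivity : (1:ℝ)/p ≠ 0), mul_zero]
    · have hc0 : 0 < |c| := abs_pos.mpr hc
      simp only [hM_def]
      have he : (fun i => |(c • x) i|) = |c| • (fun i => |x i|) := by
        funext i
        simp only [Pi.smul_apply, smul_eq_mul, abs_mul]
      have hs : Fa (|c| • fun i => |x i|) = |c| ^ p * Fa (fun i => |x i|) :=
        H.F_smul hq hpq hc0 _
      rw [he, hs]
      rw [Real.mul_rpow (Real.rpow_nonneg hc0.le p) (hFnn _ (habs x))]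
      rw [hroundtrip _ hc0.le]
      ring
  · -- definiteness
    intro x hMx
    by_contra hx0
    have habs0 : (fun i => |x i|) ≠ 0 := by
      intro hcon
      apply hx0
      funext i
      have h1 := congrFun hcon i
      simpa [abs_eq_zero] using h1
    have hFp := hFpos _ (habs x) habs0
    have hpos : 0 < M x := by
      simp only [hM_def]
      have h1 := Real.rpow_pos_of_pos hFp (1/p)
      linarith
    rw [hMx] at hpos
    exact lt_irrefl 0 hpos
  · -- monotone
    intro x y hx hxy
    simp only [hM_def]
    have hxe := habs_eq x hx
    have hye := habs_eq y (le_trans hx hxy)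
    rw [hxe, hye]
    have h1 : Fa x ≤ Fa y :=
      H.F_mono hq1 hpq hp1 (fun i => by simpa using hx i) (fun i => hxy i)
    have h2 : (Fa x) ^ (1/p) ≤ (Fa y) ^ (1/p) :=
      Real.rpow_le_rpow (hFnn _ (fun i => by simpa using hx i)) h1 hip.le
    linarith
  · -- supermodular
    intro u v w hu hv hw
    have hu' : ∀ i, 0 ≤ u i := fun i => by simpa using hu i
    have hv' : ∀ i, 0 ≤ v i := fun i => by simpa using hv i
    have hw' : ∀ i, 0 ≤ w i := fun i => by simpa using hw i
    have h10 : (0:ℝ) < 10 ^ p := Real.rpow_pos_of_pos (by norm_num) p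
    rw [hMp (u+w) (add_nonneg hu hw), hMp u hu,
      hMp (u+v+w) (add_nonneg (add_nonneg hu hv) hw), hMp (u+v) (add_nonneg hu hv)]
    have hFs := H.F_super hq hq1 hpq hp1 hu' hv' hw'
    nlinarith [mul_le_mul_of_nonneg_left hFs h10.le]
  · -- sandwich
    intro x hx
    have hx' : ∀ i, 0 ≤ x i := fun i => by simpa using hx i
    rcases eq_or_ne x 0 with rfl | hx0
    · have hA0 : orliczNorm G (0 : Fin n → ℝ) = 0 := by
        unfold orliczNorm
        have hset : {α : ℝ | 0 < α ∧ ∑ i, G ((0:Fin n → ℝ) i / α) ≤ 1} = Set.Ioi 0 := by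
          ext α
          simp [H.zero]
        rw [hset]
        exact csInf_Ioi
      have hM0 : M (0:Fin n → ℝ) = 0 := by
        simp only [hM_def]
        have he : (fun i : Fin n => |(0:Fin n → ℝ) i|) = (0:Fin n → ℝ) := by funext i; simp
        have hz : Fa (0:Fin n → ℝ) = 0 := H.F_zero hq hq1 hpq hp1
        rw [he, hz, Real.zero_rpow (by positivity : (1:ℝ)/p ≠ 0), mul_zero]
      rw [hA0, hM0]
      norm_num
    · set A := orliczNorm G x with hA_def
      have hA : 0 < A := H.orlicz_pos hx' hx0
      have hxe := habs_eq x hx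
      constructor
      · have hlow := H.F_lower hq hq1 hq2 hpq hp1 hx' hx0
        have h1 : ((A/10) ^ p) ^ (1/p) ≤ (Fa x) ^ (1/p) :=
          Real.rpow_le_rpow (by positivity) hlow hip.le
        rw [hroundtrip _ (by positivity : (0:ℝ) ≤ A/10)] at h1
        simp only [hM_def]
        rw [hxe]
        linarith
      · have hup := H.F_le hq1 hpq hp1 hx' hx0
        have h1 : (Fa x) ^ (1/p) ≤ (((n:ℝ)+1) * A ^ p) ^ (1/p) :=
          Real.rpow_le_rpow (hFnn x hx') hup hip.le
        have h2 : (((n:ℝ)+1) * A ^ p) ^ (1/p) = ((n:ℝ)+1)^(1/p) * A := by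
          rw [Real.mul_rpow (by positivity) (by positivity), hroundtrip _ hA.le]
        have h3 : ((n:ℝ)+1)^(1/p) * A ≤ 2 * A := mul_le_mul_of_nonneg_right hcard hA.le
        simp only [hM_def]
        rw [hxe]
        nlinarith [h1, h2, h3]

end Good

end SupApprox

theorem orliczNorm_supermodular_approx :
    ∃ C₁ C₂ : ℝ, 1 ≤ C₁ ∧ 1 ≤ C₂ ∧ ∀ n : ℕ, 2 ≤ n →
      ∀ G : ℝ → ℝ, IsOrliczFunction G →
        ∃ M : (Fin n → ℝ) → ℝ, IsMonotoneNorm M ∧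
          IsPSupermodular M (C₁ * Real.logb 2 n) ∧
          ∀ x : Fin n → ℝ, 0 ≤ x → orliczNorm G x ≤ M x ∧ M x ≤ C₂ * orliczNorm G x := by
  refine ⟨2, 20, by norm_num, by norm_num, ?_⟩
  intro n hn G hG
  obtain ⟨hGc, hGv, hGm, hG0, hGt⟩ := hG
  obtain ⟨T₁, hT₁2, hT₁0⟩ : ∃ t : ℝ, 2 ≤ G t ∧ 0 ≤ t :=
    ((hGt.eventually_ge_atTop 2).and (Filter.eventually_ge_atTop 0)).exists
  have H : SupApprox.Good G T₁ := ⟨hGc, hGv, hGm, hG0, hT₁0, hT₁2⟩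
  have hn2 : (2:ℝ) ≤ (n:ℝ) := by exact_mod_cast hn
  have hnpos : (0:ℝ) < n := by linarith
  set p : ℝ := 2 * Real.logb 2 n with hp_def
  have hlogb : 1 ≤ Real.logb 2 n := by
    rw [Real.le_logb_iff_rpow_le (by norm_num) hnpos, Real.rpow_one]
    exact hn2
  have hp2 : 2 ≤ p := by rw [hp_def]; linarith
  have hp1 : 1 < p := by linarith
  have hp0 : 0 < p := by linarith
  have hpsub : 0 < p - 1 := by linarith
  set q : ℝ := p / (p - 1) with hq_def
  have hpq : (p - 1) * q = p := by rw [hq_def]; field_simp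
  have hq1 : 1 < q := by
    rw [hq_def, lt_div_iff₀ hpsub]
    linarith
  have hq2 : q ≤ 2 := by
    rw [hq_def, div_le_iff₀ hpsub]
    linarith
  have hcard : ((n:ℝ) + 1) ^ (1/p) ≤ 2 := by
    have h2p : (2:ℝ) ^ p = (n:ℝ) ^ (2:ℝ) := by
      rw [hp_def, mul_comm, Real.rpow_mul (by norm_num : (0:ℝ) ≤ 2)]
      rw [Real.rpow_logb (by norm_num) (by norm_num) hnpos]
    have hsq : (n:ℝ) ^ (2:ℝ) = (n:ℝ) * (n:ℝ) := by
      rw [show (2:ℝ) = ((2:ℕ):ℝ) from by norm_num, Real.rpow_natCast]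
      ring
    have hle : (n:ℝ) + 1 ≤ (2:ℝ) ^ p := by
      rw [h2p, hsq]
      nlinarith
    calc ((n:ℝ)+1) ^ (1/p) ≤ ((2:ℝ)^p) ^ (1/p) :=
        Real.rpow_le_rpow (by positivity) hle (by positivity)
      _ = 2 := by
        rw [← Real.rpow_mul (by norm_num : (0:ℝ) ≤ 2), mul_one_div_cancel hp0.ne',
          Real.rpow_one]
  exact H.main hq1 hq2 hpq hp1 hcard
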